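/- Let T₀ ∈ ℝ, Δ > 0 and T > 3Δ, and let w : ℝ → ℝ be measurable with 0 ≤ w(t) ≤ 1 for t ∈ [T₀, T₀+T−Δ] and w(t) = 1 for t ∈ [T₀+Δ, T₀+T−2Δ]. Let a ∈ ℂ with a ≠ 0, ω ∈ ℂ with Im ω ≤ 0, ρ : ℝ → ℂ continuous, and y(t) := a·exp(−iωt) + ρ(t); set y₀(t) := a·exp(−iωt), z := exp(−iωΔ), ε₀ := ‖ρ‖_w/‖y₀‖_w, ε₁ := ‖S_Δρ‖_w/‖y₀‖_w, ε := max(ε₀,ε₁), and ẑ := ⟨S_Δ y, y⟩_w / ⟨y, y⟩_w. If ε ≤ min(1/8, |z|/20), then ẑ ≠ 0, |ẑ − z| ≤ |z|/2, and there exists k ∈ ℤ such that |(i/Δ)·(Log ẑ + 2πik) − ω| ≤ 10ε/(Δ|z|). -/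

import Mathlib

open MeasureTheory

lemma aux_integrable {μ : Measure ℝ} [IsFiniteMeasure μ] {w : ℝ → ℝ} (hwm : Measurable w)
    (hw01 : ∀ᵐ t ∂μ, 0 ≤ w t ∧ w t ≤ 1) {f g : ℝ → ℂ} (hf : Continuous f) (hg : Continuous g)
    {Cf Cg : ℝ} (hfb : ∀ᵐ t ∂μ, ‖f t‖ ≤ Cf) (hgb : ∀ᵐ t ∂μ, ‖g t‖ ≤ Cg) :
    Integrable (fun t => (w t : ℂ) * f t * (starRingEnd ℂ) (g t)) μ := by
  have hm : AEStronglyMeasurable (fun t => (w t : ℂ) * f t * (starRingEnd ℂ) (g t)) μ :=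
    (((Complex.measurable_ofReal.comp hwm).mul hf.measurable).mul
      ((Complex.continuous_conj.comp hg).measurable)).aestronglyMeasurable
  refine memLp_one_iff_integrable.mp (MemLp.of_bound hm (Cf * Cg) ?_)
  filter_upwards [hw01, hfb, hgb] with t hw hfb hgb
  have h1 : ‖(w t : ℂ) * f t * (starRingEnd ℂ) (g t)‖ = |w t| * ‖f t‖ * ‖g t‖ := by
    simp [norm_mul, Complex.norm_real]
  rw [h1, abs_of_nonneg hw.1]
  have hCf : 0 ≤ Cf := le_trans (norm_nonneg _) hfb
  calc w t * ‖f t‖ * ‖g t‖ ≤ 1 * Cf * Cg := by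
        apply mul_le_mul (mul_le_mul hw.2 hfb (norm_nonneg _) zero_le_one) hgb (norm_nonneg _)
        simpa using hCf
    _ = Cf * Cg := by ring

lemma aux_self {μ : Measure ℝ} {w : ℝ → ℝ} {f : ℝ → ℂ} :
    ∫ t, (w t : ℂ) * f t * (starRingEnd ℂ) (f t) ∂μ
      = ((∫ t, w t * Complex.normSq (f t) ∂μ : ℝ) : ℂ) := by
  have h1 : ∫ t, (w t : ℂ) * f t * (starRingEnd ℂ) (f t) ∂μ
      = ∫ t, ((w t * Complex.normSq (f t) : ℝ) : ℂ) ∂μ := by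
    apply integral_congr_ae
    filter_upwards with t
    rw [mul_assoc, Complex.mul_conj]
    push_cast
    ring
  rw [h1]
  exact integral_ofReal (𝕜 := ℂ) (μ := μ) (f := fun t => w t * Complex.normSq (f t))

lemma aux_integrable_real {μ : Measure ℝ} [IsFiniteMeasure μ] {w : ℝ → ℝ} (hwm : Measurable w)
    (hw01 : ∀ᵐ t ∂μ, 0 ≤ w t ∧ w t ≤ 1) {f : ℝ → ℂ} (hf : Continuous f)
    {Cf : ℝ} (hfb : ∀ᵐ t ∂μ, ‖f t‖ ≤ Cf) :
    Integrable (fun t => w t * Complex.normSq (f t)) μ := by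
  have hm : AEStronglyMeasurable (fun t => w t * Complex.normSq (f t)) μ :=
    (hwm.mul ((Complex.continuous_normSq.comp hf).measurable)).aestronglyMeasurable
  refine memLp_one_iff_integrable.mp (MemLp.of_bound hm (Cf * Cf) ?_)
  filter_upwards [hw01, hfb] with t hw hfb
  rw [Real.norm_eq_abs, abs_of_nonneg (mul_nonneg hw.1 (Complex.normSq_nonneg _))]
  have h2 : Complex.normSq (f t) = ‖f t‖ * ‖f t‖ := by
    rw [Complex.normSq_eq_norm_sq, sq]
  have hCf : 0 ≤ Cf := le_trans (norm_nonneg _) hfb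
  calc w t * Complex.normSq (f t) ≤ 1 * (Cf * Cf) := by
        rw [h2]
        exact mul_le_mul hw.2
          (mul_le_mul hfb hfb (norm_nonneg _) hCf) (by positivity) zero_le_one
    _ = Cf * Cf := one_mul _

lemma aux_cs {μ : Measure ℝ} [IsFiniteMeasure μ] {w : ℝ → ℝ} (hwm : Measurable w)
    (hw01 : ∀ᵐ t ∂μ, 0 ≤ w t ∧ w t ≤ 1) {f g : ℝ → ℂ} (hf : Continuous f) (hg : Continuous g)
    {Cf Cg : ℝ} (hfb : ∀ᵐ t ∂μ, ‖f t‖ ≤ Cf) (hgb : ∀ᵐ t ∂μ, ‖g t‖ ≤ Cg) :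
    ‖∫ t, (w t : ℂ) * f t * (starRingEnd ℂ) (g t) ∂μ‖
      ≤ Real.sqrt (∫ t, w t * Complex.normSq (f t) ∂μ)
        * Real.sqrt (∫ t, w t * Complex.normSq (g t) ∂μ) := by
  have hpq : Real.HolderConjugate 2 2 := Real.HolderConjugate.two_two
  set F : ℝ → ℝ := fun t => Real.sqrt (w t) * ‖f t‖ with hF
  set G : ℝ → ℝ := fun t => Real.sqrt (w t) * ‖g t‖ with hG
  have hFb : ∀ᵐ t ∂μ, ‖F t‖ ≤ Cf := by
    filter_upwards [hw01, hfb] with t hw hfb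
    have h1 : Real.sqrt (w t) ≤ 1 := Real.sqrt_le_one.mpr hw.2
    rw [Real.norm_eq_abs, abs_of_nonneg (mul_nonneg (Real.sqrt_nonneg _) (norm_nonneg _))]
    calc Real.sqrt (w t) * ‖f t‖ ≤ 1 * Cf :=
          mul_le_mul h1 hfb (norm_nonneg _) zero_le_one
      _ = Cf := one_mul _
  have hGb : ∀ᵐ t ∂μ, ‖G t‖ ≤ Cg := by
    filter_upwards [hw01, hgb] with t hw hgb
    have h1 : Real.sqrt (w t) ≤ 1 := Real.sqrt_le_one.mpr hw.2
    rw [Real.norm_eq_abs, abs_of_nonneg (mul_nonneg (Real.sqrt_nonneg _) (norm_nonneg _))]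
    calc Real.sqrt (w t) * ‖g t‖ ≤ 1 * Cg :=
          mul_le_mul h1 hgb (norm_nonneg _) zero_le_one
      _ = Cg := one_mul _
  have hFm : AEStronglyMeasurable F μ :=
    ((hwm.sqrt).mul (continuous_norm.comp hf).measurable).aestronglyMeasurable
  have hGm : AEStronglyMeasurable G μ :=
    ((hwm.sqrt).mul (continuous_norm.comp hg).measurable).aestronglyMeasurable
  have hFL : MemLp F (ENNReal.ofReal 2) μ := MemLp.of_bound hFm Cf hFb
  have hGL : MemLp G (ENNReal.ofReal 2) μ := MemLp.of_bound hGm Cg hGb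
  have key := MeasureTheory.integral_mul_le_Lp_mul_Lq_of_nonneg hpq
    (Filter.Eventually.of_forall fun t => mul_nonneg (Real.sqrt_nonneg _) (norm_nonneg _))
    (Filter.Eventually.of_forall fun t => mul_nonneg (Real.sqrt_nonneg _) (norm_nonneg _))
    hFL hGL
  have hFG : ∫ t, F t * G t ∂μ = ∫ t, w t * (‖f t‖ * ‖g t‖) ∂μ := by
    apply integral_congr_ae
    filter_upwards [hw01] with t hw
    simp only [hF, hG]
    rw [show Real.sqrt (w t) * ‖f t‖ * (Real.sqrt (w t) * ‖g t‖)
        = (Real.sqrt (w t) * Real.sqrt (w t)) * (‖f t‖ * ‖g t‖) by ring,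
      Real.mul_self_sqrt hw.1]
  have hF2 : ∫ t, F t ^ (2:ℝ) ∂μ = ∫ t, w t * Complex.normSq (f t) ∂μ := by
    apply integral_congr_ae
    filter_upwards [hw01] with t hw
    rw [Real.rpow_two, hF, mul_pow, Real.sq_sqrt hw.1, Complex.normSq_eq_norm_sq]
  have hG2 : ∫ t, G t ^ (2:ℝ) ∂μ = ∫ t, w t * Complex.normSq (g t) ∂μ := by
    apply integral_congr_ae
    filter_upwards [hw01] with t hw
    rw [Real.rpow_two, hG, mul_pow, Real.sq_sqrt hw.1, Complex.normSq_eq_norm_sq]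
  have hnorm : ‖∫ t, (w t : ℂ) * f t * (starRingEnd ℂ) (g t) ∂μ‖
      ≤ ∫ t, w t * (‖f t‖ * ‖g t‖) ∂μ := by
    refine le_trans (norm_integral_le_integral_norm _) (le_of_eq (integral_congr_ae ?_))
    filter_upwards [hw01] with t hw
    simp [norm_mul, Complex.norm_real, abs_of_nonneg hw.1, mul_assoc]
  calc ‖∫ t, (w t : ℂ) * f t * (starRingEnd ℂ) (g t) ∂μ‖
      ≤ ∫ t, w t * (‖f t‖ * ‖g t‖) ∂μ := hnorm
    _ = ∫ t, F t * G t ∂μ := hFG.symm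
    _ ≤ (∫ t, F t ^ (2:ℝ) ∂μ) ^ (1/(2:ℝ)) * (∫ t, G t ^ (2:ℝ) ∂μ) ^ (1/(2:ℝ)) := key
    _ = Real.sqrt (∫ t, w t * Complex.normSq (f t) ∂μ)
        * Real.sqrt (∫ t, w t * Complex.normSq (g t) ∂μ) := by
        rw [hF2, hG2, Real.sqrt_eq_rpow, Real.sqrt_eq_rpow]

set_option maxHeartbeats 2000000 in
/-- Deterministic one-mode frequency extraction: the shift Rayleigh quotient
estimator combined with a logarithm branch recovers the complex frequency with
an explicit error bound. -/
theorem one_mode_frequency_extraction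
    (T₀ T Δ : ℝ) (hΔ : 0 < Δ) (hT : 3 * Δ < T)
    (w : ℝ → ℝ) (hwm : Measurable w)
    (hw : ∀ t ∈ Set.Icc T₀ (T₀ + T - Δ), 0 ≤ w t ∧ w t ≤ 1)
    (hw1 : ∀ t ∈ Set.Icc (T₀ + Δ) (T₀ + T - 2 * Δ), w t = 1)
    (a ω : ℂ) (ha : a ≠ 0) (hω : ω.im ≤ 0)
    (ρ : ℝ → ℂ) (hρ : Continuous ρ)
    (y₀ y : ℝ → ℂ)
    (hy₀ : y₀ = fun t : ℝ => a * Complex.exp (-Complex.I * ω * (t : ℂ)))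
    (hy : y = fun t : ℝ => a * Complex.exp (-Complex.I * ω * (t : ℂ)) + ρ t)
    (z : ℂ) (hz : z = Complex.exp (-Complex.I * ω * (Δ : ℂ)))
    (ip : (ℝ → ℂ) → (ℝ → ℂ) → ℂ)
    (hip : ip = fun f g => ∫ t in T₀..(T₀ + T - Δ),
      ((w t : ℂ) * f t * (starRingEnd ℂ) (g t)))
    (nw : (ℝ → ℂ) → ℝ)
    (hnw : nw = fun f => Real.sqrt (ip f f).re)
    (ε₀ ε₁ ε : ℝ)
    (hε₀ : ε₀ = nw ρ / nw y₀)
    (hε₁ : ε₁ = nw (fun t => ρ (t + Δ)) / nw y₀)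
    (hε : ε = max ε₀ ε₁)
    (zhat : ℂ)
    (hzhat : zhat = ip (fun t => y (t + Δ)) y / ip y y)
    (hsmall : ε ≤ min (1 / 8) (‖z‖ / 20)) :
    zhat ≠ 0 ∧
    ‖zhat - z‖ ≤ ‖z‖ / 2 ∧
    ∃ k : ℤ,
      ‖(Complex.I / (Δ : ℂ)) *
          (Complex.log zhat + 2 * Real.pi * Complex.I * (k : ℂ)) - ω‖
        ≤ 10 * ε / (Δ * ‖z‖) := by
  -- basic real inequalities
  have hb1 : 0 < T - 3 * Δ := by linarith
  set b : ℝ := T₀ + T - Δ with hbdef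
  set c : ℝ := T₀ + T - 2 * Δ with hcdef
  have hble : T₀ ≤ b := by simp only [hbdef]; linarith
  -- the measure
  set μ : Measure ℝ := volume.restrict (Set.Ioc T₀ b) with hμdef
  haveI : IsFiniteMeasure μ :=
    ⟨by rw [hμdef, Measure.restrict_apply_univ, Real.volume_Ioc]; exact ENNReal.ofReal_lt_top⟩
  have haeIcc : ∀ᵐ t ∂μ, t ∈ Set.Icc T₀ b := by
    filter_upwards [ae_restrict_mem (μ := volume) (measurableSet_Ioc (a := T₀) (b := b))] with t ht
    exact Set.Ioc_subset_Icc_self ht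
  have hw01 : ∀ᵐ t ∂μ, 0 ≤ w t ∧ w t ≤ 1 := by
    filter_upwards [haeIcc] with t ht; exact hw t ht
  -- continuity
  have hy₀c : Continuous y₀ := by
    rw [hy₀]; fun_prop
  have hyc : Continuous y := by
    rw [hy]; fun_prop
  set ρΔ : ℝ → ℂ := fun t => ρ (t + Δ) with hρΔdef
  have hρΔc : Continuous ρΔ := hρ.comp (by fun_prop)
  have hSc : Continuous (fun t => y (t + Δ)) := hyc.comp (by fun_prop)
  -- a.e. bounds for continuous functions
  have bdd : ∀ (h : ℝ → ℂ), Continuous h → ∃ C : ℝ, ∀ᵐ t ∂μ, ‖h t‖ ≤ C := by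
    intro h hc
    obtain ⟨C, hC⟩ := (isCompact_Icc (a := T₀) (b := b)).exists_bound_of_continuousOn
      hc.continuousOn
    exact ⟨C, by filter_upwards [haeIcc] with t ht using hC t ht⟩
  obtain ⟨C₀, hC₀⟩ := bdd y₀ hy₀c
  obtain ⟨Cy, hCy⟩ := bdd y hyc
  obtain ⟨Cρ, hCρ⟩ := bdd ρ hρ
  obtain ⟨CΔ, hCΔ⟩ := bdd ρΔ hρΔc
  obtain ⟨CS, hCS⟩ := bdd _ hSc
  -- ip in terms of μ
  have hip' : ∀ f g : ℝ → ℂ, ip f g = ∫ t, (w t : ℂ) * f t * (starRingEnd ℂ) (g t) ∂μ := by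
    intro f g
    rw [hip]
    exact intervalIntegral.integral_of_le hble
  -- nw in terms of μ
  have hnw' : ∀ f : ℝ → ℂ, nw f = Real.sqrt (∫ t, w t * Complex.normSq (f t) ∂μ) := by
    intro f
    rw [hnw]
    simp only [hip' f f, aux_self, Complex.ofReal_re]
  have hInt_nonneg : ∀ f : ℝ → ℂ, 0 ≤ ∫ t, w t * Complex.normSq (f t) ∂μ := by
    intro f
    apply integral_nonneg_of_ae
    filter_upwards [hw01] with t ht
    exact mul_nonneg ht.1 (Complex.normSq_nonneg _)
  have hnw_nonneg : ∀ f : ℝ → ℂ, 0 ≤ nw f := fun f => by rw [hnw']; exact Real.sqrt_nonneg _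
  have hnw_sq : ∀ f : ℝ → ℂ, nw f ^ 2 = ∫ t, w t * Complex.normSq (f t) ∂μ := by
    intro f
    rw [hnw', Real.sq_sqrt (hInt_nonneg f)]
  have hipself : ∀ f : ℝ → ℂ, ip f f = ((nw f ^ 2 : ℝ) : ℂ) := by
    intro f
    rw [hip' f f, aux_self, hnw_sq]
  -- Cauchy-Schwarz
  have CS : ∀ (f g : ℝ → ℂ), Continuous f → Continuous g →
      ‖ip f g‖ ≤ nw f * nw g := by
    intro f g hf hg
    obtain ⟨Cf, hCf⟩ := bdd f hf
    obtain ⟨Cg, hCg⟩ := bdd g hg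
    rw [hip' f g, hnw' f, hnw' g]
    exact aux_cs hwm hw01 hf hg hCf hCg
  -- positivity of nw y₀
  have hNpos : 0 < nw y₀ := by
    rw [hnw']
    apply Real.sqrt_pos.mpr
    set m : ℝ := Complex.normSq a * Real.exp (c * ω.im) ^ 2 with hmdef
    have hm : 0 < m := by
      apply mul_pos (Complex.normSq_pos.mpr ha)
      positivity
    have hsub : Set.Ioc (T₀ + Δ) c ⊆ Set.Ioc T₀ b := by
      intro x hx
      constructor
      · linarith [hx.1]
      · simp only [hbdef]; have := hx.2; simp only [hcdef] at this; linarith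
    have hwint : Integrable (fun t => w t * Complex.normSq (y₀ t)) μ :=
      aux_integrable_real hwm hw01 hy₀c hC₀
    have h_lb : ∀ t ∈ Set.Ioc (T₀ + Δ) c, m ≤ w t * Complex.normSq (y₀ t) := by
      intro t ht
      have hw1t : w t = 1 := hw1 t (Set.Ioc_subset_Icc_self ht)
      have hns : Complex.normSq (y₀ t) = Complex.normSq a * Real.exp (t * ω.im) ^ 2 := by
        rw [hy₀]
        simp only
        rw [Complex.normSq_mul, Complex.normSq_eq_norm_sq (Complex.exp _), Complex.norm_exp]
        congr 3
        simp [Complex.mul_re, Complex.mul_im]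
        ring
      rw [hw1t, one_mul, hns, hmdef]
      have hexp : Real.exp (c * ω.im) ≤ Real.exp (t * ω.im) := by
        apply Real.exp_le_exp.mpr
        have ht2 : t ≤ c := ht.2
        exact mul_le_mul_of_nonpos_right ht2 hω
      have := pow_le_pow_left₀ (Real.exp_nonneg _) hexp 2
      nlinarith [Complex.normSq_nonneg a]
    have hmono : ∫ t in Set.Ioc (T₀ + Δ) c, w t * Complex.normSq (y₀ t)
        ≤ ∫ t, w t * Complex.normSq (y₀ t) ∂μ := by
      rw [hμdef]
      apply setIntegral_mono_set hwint
      · filter_upwards [hw01] with t ht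
        exact mul_nonneg ht.1 (Complex.normSq_nonneg _)
      · exact HasSubset.Subset.eventuallyLE hsub
    have hge : m * (volume (Set.Ioc (T₀ + Δ) c)).toReal
        ≤ ∫ t in Set.Ioc (T₀ + Δ) c, w t * Complex.normSq (y₀ t) := by
      apply setIntegral_ge_of_const_le_real measurableSet_Ioc
      · rw [Real.volume_Ioc]; exact ENNReal.ofReal_ne_top
      · exact h_lb
      · exact hwint.mono_measure (Measure.restrict_mono hsub le_rfl)
    have hvol : (volume (Set.Ioc (T₀ + Δ) c)).toReal = T - 3 * Δ := by
      rw [Real.volume_Ioc, ENNReal.toReal_ofReal (by simp only [hcdef]; linarith)]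
      simp only [hcdef]; ring
    rw [hvol] at hge
    calc (0:ℝ) < m * (T - 3 * Δ) := by positivity
      _ ≤ _ := le_trans hge hmono
  -- pointwise identities
  have hysplit : ∀ t : ℝ, y t = y₀ t + ρ t := by
    intro t; rw [hy, hy₀]
  have hpoint : ∀ t : ℝ, y (t + Δ) = z * y₀ t + ρΔ t := by
    intro t
    rw [hy, hy₀, hz, hρΔdef]
    simp only
    rw [show (-Complex.I * ω * ((t + Δ : ℝ) : ℂ)) = -Complex.I * ω * (t:ℂ) + -Complex.I * ω * (Δ:ℂ)
      by push_cast; ring, Complex.exp_add]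
    ring
  -- integrability of the pieces
  have I00 : Integrable (fun t => (w t : ℂ) * y₀ t * (starRingEnd ℂ) (y₀ t)) μ :=
    aux_integrable hwm hw01 hy₀c hy₀c hC₀ hC₀
  have I0ρ : Integrable (fun t => (w t : ℂ) * y₀ t * (starRingEnd ℂ) (ρ t)) μ :=
    aux_integrable hwm hw01 hy₀c hρ hC₀ hCρ
  have Iρ0 : Integrable (fun t => (w t : ℂ) * ρ t * (starRingEnd ℂ) (y₀ t)) μ :=
    aux_integrable hwm hw01 hρ hy₀c hCρ hC₀
  have Iρρ : Integrable (fun t => (w t : ℂ) * ρ t * (starRingEnd ℂ) (ρ t)) μ :=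
    aux_integrable hwm hw01 hρ hρ hCρ hCρ
  have IΔ0 : Integrable (fun t => (w t : ℂ) * ρΔ t * (starRingEnd ℂ) (y₀ t)) μ :=
    aux_integrable hwm hw01 hρΔc hy₀c hCΔ hC₀
  have IΔρ : Integrable (fun t => (w t : ℂ) * ρΔ t * (starRingEnd ℂ) (ρ t)) μ :=
    aux_integrable hwm hw01 hρΔc hρ hCΔ hCρ
  -- expansions
  have h1 : ip (fun t => y (t + Δ)) y
      = z * ip y₀ y₀ + z * ip y₀ ρ + ip ρΔ y₀ + ip ρΔ ρ := by
    have e1 : ip (fun t => y (t + Δ)) y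
        = ∫ t, (z * ((w t : ℂ) * y₀ t * (starRingEnd ℂ) (y₀ t))
            + z * ((w t : ℂ) * y₀ t * (starRingEnd ℂ) (ρ t))
            + (w t : ℂ) * ρΔ t * (starRingEnd ℂ) (y₀ t)
            + (w t : ℂ) * ρΔ t * (starRingEnd ℂ) (ρ t)) ∂μ := by
      rw [hip']
      refine integral_congr_ae (Filter.Eventually.of_forall fun t => ?_)
      simp only [hpoint t, hysplit t, map_add]
      ring
    have J1 : Integrable (fun t => z * ((w t : ℂ) * y₀ t * (starRingEnd ℂ) (y₀ t))
        + z * ((w t : ℂ) * y₀ t * (starRingEnd ℂ) (ρ t))) μ :=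
      (I00.const_mul z).add (I0ρ.const_mul z)
    have J2 : Integrable (fun t => z * ((w t : ℂ) * y₀ t * (starRingEnd ℂ) (y₀ t))
        + z * ((w t : ℂ) * y₀ t * (starRingEnd ℂ) (ρ t))
        + (w t : ℂ) * ρΔ t * (starRingEnd ℂ) (y₀ t)) μ := J1.add IΔ0
    rw [e1, integral_add J2 IΔρ, integral_add J1 IΔ0,
      integral_add (I00.const_mul z) (I0ρ.const_mul z),
      integral_const_mul, integral_const_mul, hip', hip', hip', hip']
  have h2 : ip y y = ip y₀ y₀ + ip y₀ ρ + ip ρ y₀ + ip ρ ρ := by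
    have e2 : ip y y
        = ∫ t, ((w t : ℂ) * y₀ t * (starRingEnd ℂ) (y₀ t)
            + (w t : ℂ) * y₀ t * (starRingEnd ℂ) (ρ t)
            + (w t : ℂ) * ρ t * (starRingEnd ℂ) (y₀ t)
            + (w t : ℂ) * ρ t * (starRingEnd ℂ) (ρ t)) ∂μ := by
      rw [hip']
      refine integral_congr_ae (Filter.Eventually.of_forall fun t => ?_)
      simp only [hysplit t, map_add]
      ring
    have K1 : Integrable (fun t => (w t : ℂ) * y₀ t * (starRingEnd ℂ) (y₀ t)
        + (w t : ℂ) * y₀ t * (starRingEnd ℂ) (ρ t)) μ := I00.add I0ρ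
    have K2 : Integrable (fun t => (w t : ℂ) * y₀ t * (starRingEnd ℂ) (y₀ t)
        + (w t : ℂ) * y₀ t * (starRingEnd ℂ) (ρ t)
        + (w t : ℂ) * ρ t * (starRingEnd ℂ) (y₀ t)) μ := K1.add Iρ0
    rw [e2, integral_add K2 Iρρ, integral_add K1 Iρ0,
      integral_add I00 I0ρ, hip', hip', hip', hip']
  -- numeric abbreviations
  set N : ℝ := nw y₀ with hNdef
  set az : ℝ := ‖z‖ with hazdef
  have haz0 : 0 < az := by
    rw [hazdef, hz, Complex.norm_exp]
    positivity
  have haz1 : az ≤ 1 := by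
    rw [hazdef, hz, Complex.norm_exp]
    have : (-Complex.I * ω * (Δ:ℂ)).re = Δ * ω.im := by
      simp [Complex.mul_re, Complex.mul_im]
      ring
    rw [this]
    exact Real.exp_le_one_iff.mpr (mul_nonpos_of_nonneg_of_nonpos (le_of_lt hΔ) hω)
  have hε0nn : 0 ≤ ε₀ := by rw [hε₀]; exact div_nonneg (hnw_nonneg _) (hnw_nonneg _)
  have hε1nn : 0 ≤ ε₁ := by rw [hε₁]; exact div_nonneg (hnw_nonneg _) (hnw_nonneg _)
  have hεnn : 0 ≤ ε := by rw [hε]; exact le_max_of_le_left hε0nn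
  have hε0ε : ε₀ ≤ ε := by rw [hε]; exact le_max_left _ _
  have hε1ε : ε₁ ≤ ε := by rw [hε]; exact le_max_right _ _
  have hε8 : ε ≤ 1 / 8 := le_trans hsmall (min_le_left _ _)
  have hεz : ε ≤ az / 20 := by
    rw [hazdef]; exact le_trans hsmall (min_le_right _ _)
  have hρnw : nw ρ = ε₀ * N := by
    rw [hε₀]; field_simp
  have hρΔnw : nw ρΔ = ε₁ * N := by
    rw [hε₁]; field_simp
  -- Cauchy-Schwarz bounds
  have cs0ρ : ‖ip y₀ ρ‖ ≤ ε₀ * N ^ 2 := by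
    calc ‖ip y₀ ρ‖ ≤ nw y₀ * nw ρ := CS _ _ hy₀c hρ
      _ = ε₀ * N ^ 2 := by rw [hρnw, ← hNdef]; ring
  have csρ0 : ‖ip ρ y₀‖ ≤ ε₀ * N ^ 2 := by
    calc ‖ip ρ y₀‖ ≤ nw ρ * nw y₀ := CS _ _ hρ hy₀c
      _ = ε₀ * N ^ 2 := by rw [hρnw, ← hNdef]; ring
  have csρρ : ‖ip ρ ρ‖ ≤ ε₀ ^ 2 * N ^ 2 := by
    calc ‖ip ρ ρ‖ ≤ nw ρ * nw ρ := CS _ _ hρ hρ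
      _ = ε₀ ^ 2 * N ^ 2 := by rw [hρnw]; ring
  have csΔ0 : ‖ip ρΔ y₀‖ ≤ ε₁ * N ^ 2 := by
    calc ‖ip ρΔ y₀‖ ≤ nw ρΔ * nw y₀ := CS _ _ hρΔc hy₀c
      _ = ε₁ * N ^ 2 := by rw [hρΔnw, ← hNdef]; ring
  have csΔρ : ‖ip ρΔ ρ‖ ≤ ε₁ * ε₀ * N ^ 2 := by
    calc ‖ip ρΔ ρ‖ ≤ nw ρΔ * nw ρ := CS _ _ hρΔc hρ
      _ = ε₁ * ε₀ * N ^ 2 := by rw [hρΔnw, hρnw]; ring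
  have habs00 : ‖ip y₀ y₀‖ = N ^ 2 := by
    rw [hipself y₀, ← hNdef, Complex.norm_real, Real.norm_eq_abs, abs_of_nonneg (by positivity)]
  -- lower bound on the denominator
  have hD_lb : 47 / 64 * N ^ 2 ≤ ‖ip y y‖ := by
    have htri : ‖ip y₀ y₀‖
        ≤ ‖ip y y‖ + (‖ip y₀ ρ‖ + ‖ip ρ y₀‖
          + ‖ip ρ ρ‖) := by
      have : ip y₀ y₀ = ip y y - (ip y₀ ρ + ip ρ y₀ + ip ρ ρ) := by rw [h2]; ring
      rw [this]
      calc ‖ip y y - (ip y₀ ρ + ip ρ y₀ + ip ρ ρ)‖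
          ≤ ‖ip y y‖ + ‖ip y₀ ρ + ip ρ y₀ + ip ρ ρ‖ := by
            apply norm_sub_le
        _ ≤ _ := by
            gcongr
            calc ‖ip y₀ ρ + ip ρ y₀ + ip ρ ρ‖
                ≤ ‖ip y₀ ρ + ip ρ y₀‖ + ‖ip ρ ρ‖ :=
                  norm_add_le _ _
              _ ≤ ‖ip y₀ ρ‖ + ‖ip ρ y₀‖ + ‖ip ρ ρ‖ := by
                  gcongr; exact norm_add_le _ _
    rw [habs00] at htri
    have hNsq : 0 ≤ N ^ 2 := by positivity
    nlinarith [mul_le_mul_of_nonneg_right hε0ε hNsq, sq_nonneg ε₀, sq_nonneg N,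
      mul_le_mul_of_nonneg_right (mul_self_le_mul_self hε0nn (le_trans hε0ε hε8)) hNsq]
  have hDpos : 0 < ‖ip y y‖ := by
    have : 0 < 47 / 64 * N ^ 2 := by positivity
    linarith
  have hDne : ip y y ≠ 0 := by
    intro hcon
    rw [hcon] at hDpos
    simp at hDpos
  -- numerator bound
  have hnum : ‖ip (fun t => y (t + Δ)) y - z * ip y y‖ ≤ 9 / 4 * ε * N ^ 2 := by
    have hnum_eq : ip (fun t => y (t + Δ)) y - z * ip y y
        = ip ρΔ y₀ + ip ρΔ ρ - z * ip ρ y₀ - z * ip ρ ρ := by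
      rw [h1, h2]; ring
    rw [hnum_eq]
    have htri : ‖ip ρΔ y₀ + ip ρΔ ρ - z * ip ρ y₀ - z * ip ρ ρ‖
        ≤ ‖ip ρΔ y₀‖ + ‖ip ρΔ ρ‖ + az * ‖ip ρ y₀‖
          + az * ‖ip ρ ρ‖ := by
      calc ‖ip ρΔ y₀ + ip ρΔ ρ - z * ip ρ y₀ - z * ip ρ ρ‖
          ≤ ‖ip ρΔ y₀ + ip ρΔ ρ - z * ip ρ y₀‖ + ‖z * ip ρ ρ‖ :=
            norm_sub_le _ _
        _ ≤ ‖ip ρΔ y₀ + ip ρΔ ρ‖ + ‖z * ip ρ y₀‖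
            + ‖z * ip ρ ρ‖ := by
            gcongr; exact norm_sub_le _ _
        _ ≤ _ := by
            rw [norm_mul, norm_mul, ← hazdef]
            gcongr
            exact norm_add_le _ _
    refine le_trans htri ?_
    have hNsq : (0:ℝ) ≤ N ^ 2 := by positivity
    refine le_trans (add_le_add (add_le_add (add_le_add csΔ0 csΔρ)
      (mul_le_mul_of_nonneg_left csρ0 (le_of_lt haz0)))
      (mul_le_mul_of_nonneg_left csρρ (le_of_lt haz0))) ?_
    have t1 : ε₁ * N ^ 2 ≤ ε * N ^ 2 := mul_le_mul_of_nonneg_right hε1ε hNsq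
    have t2 : ε₁ * ε₀ * N ^ 2 ≤ ε * (1/8) * N ^ 2 :=
      mul_le_mul_of_nonneg_right
        (mul_le_mul hε1ε (le_trans hε0ε hε8) hε0nn hεnn) hNsq
    have t3 : az * (ε₀ * N ^ 2) ≤ ε * N ^ 2 := by
      calc az * (ε₀ * N ^ 2) ≤ 1 * (ε * N ^ 2) :=
            mul_le_mul haz1 (mul_le_mul_of_nonneg_right hε0ε hNsq)
              (by positivity) (by norm_num)
        _ = ε * N ^ 2 := one_mul _
    have t4 : az * (ε₀ ^ 2 * N ^ 2) ≤ ε * (1/8) * N ^ 2 := by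
      have he2 : ε₀ ^ 2 ≤ ε * (1/8) := by nlinarith
      calc az * (ε₀ ^ 2 * N ^ 2) ≤ 1 * (ε * (1/8) * N ^ 2) :=
            mul_le_mul haz1 (mul_le_mul_of_nonneg_right he2 hNsq)
              (by positivity) (by norm_num)
        _ = ε * (1/8) * N ^ 2 := one_mul _
    linarith
  -- difference bound
  have hdiff : zhat - z = (ip (fun t => y (t + Δ)) y - z * ip y y) / ip y y := by
    rw [hzhat]; field_simp
  have habsdiff : ‖zhat - z‖ ≤ 144 / 47 * ε := by
    rw [hdiff, norm_div, div_le_iff₀ hDpos]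
    calc ‖ip (fun t => y (t + Δ)) y - z * ip y y‖
        ≤ 9 / 4 * ε * N ^ 2 := hnum
      _ = 144 / 47 * ε * (47 / 64 * N ^ 2) := by ring
      _ ≤ 144 / 47 * ε * ‖ip y y‖ :=
          mul_le_mul_of_nonneg_left hD_lb (by positivity)
  have hhalf : ‖zhat - z‖ ≤ az / 2 := by
    refine le_trans habsdiff ?_
    linarith
  have hzhat0 : zhat ≠ 0 := by
    intro h0
    rw [h0, zero_sub, norm_neg, ← hazdef] at hhalf
    linarith
  refine ⟨hzhat0, hhalf, ?_⟩
  -- logarithm branch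
  have hzne : z ≠ 0 := by rw [hz]; exact Complex.exp_ne_zero _
  set u : ℂ := zhat / z - 1 with hudef
  have h1u : (1 : ℂ) + u = zhat / z := by rw [hudef]; ring
  have hu_eq : u = (zhat - z) / z := by rw [hudef]; field_simp
  have hu_abs : ‖u‖ ≤ 144 / 47 * ε / az := by
    rw [hu_eq, norm_div, ← hazdef]
    exact (div_le_div_iff_of_pos_right haz0).mpr habsdiff
  have hu_half : ‖u‖ ≤ 1 / 2 := by
    refine le_trans hu_abs ?_
    rw [div_le_iff₀ haz0]
    linarith
  have h1une : (1 : ℂ) + u ≠ 0 := by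
    rw [h1u]
    exact div_ne_zero hzhat0 hzne
  have hL : ‖Complex.log (1 + u)‖ ≤ 3 / 2 * ‖u‖ := by
    have := Complex.norm_log_one_add_half_le_self
      (z := u) hu_half
    exact this
  have hzinv : Complex.exp (Complex.I * ω * (Δ : ℂ)) = z⁻¹ := by
    rw [hz, ← Complex.exp_neg]
    congr 1
    ring
  have hexp1 : Complex.exp (Complex.log zhat - Complex.log (1 + u)
      + Complex.I * ω * (Δ : ℂ)) = 1 := by
    rw [Complex.exp_add, Complex.exp_sub, Complex.exp_log hzhat0, Complex.exp_log h1une,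
      hzinv, h1u]
    field_simp
  obtain ⟨n, hn⟩ := Complex.exp_eq_one_iff.mp hexp1
  refine ⟨-n, ?_⟩
  have hkey : Complex.log zhat + 2 * (Real.pi : ℂ) * Complex.I * ((-n : ℤ) : ℂ)
      = Complex.log (1 + u) - Complex.I * ω * (Δ : ℂ) := by
    push_cast
    linear_combination hn
  rw [hkey]
  have hΔC : (Δ : ℂ) ≠ 0 := by exact_mod_cast ne_of_gt hΔ
  have hsimp : Complex.I / (Δ : ℂ) * (Complex.log (1 + u) - Complex.I * ω * (Δ : ℂ)) - ω
      = Complex.I / (Δ : ℂ) * Complex.log (1 + u) := by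
    field_simp
    linear_combination (-(ω * (Δ:ℂ))) * Complex.I_sq
  rw [hsimp]
  have hLa : ‖Complex.log (1 + u)‖ ≤ 216 / 47 * (ε / az) := by
    calc ‖Complex.log (1 + u)‖ ≤ 3 / 2 * ‖u‖ := hL
      _ ≤ 3 / 2 * (144 / 47 * ε / az) := mul_le_mul_of_nonneg_left hu_abs (by norm_num)
      _ = 216 / 47 * (ε / az) := by ring
  calc ‖Complex.I / (Δ : ℂ) * Complex.log (1 + u)‖
      = ‖Complex.log (1 + u)‖ / Δ := by
        rw [norm_mul, norm_div, Complex.norm_I, Complex.norm_real, Real.norm_eq_abs, abs_of_pos hΔ]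
        ring
    _ ≤ (216 / 47 * (ε / az)) / Δ := (div_le_div_iff_of_pos_right hΔ).mpr hLa
    _ = 216 / 47 * (ε / (Δ * az)) := by
        ring
    _ ≤ 10 * (ε / (Δ * az)) :=
        mul_le_mul_of_nonneg_right (by norm_num)
          (div_nonneg hεnn (by positivity))
    _ = 10 * ε / (Δ * az) := by ring
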